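/- The bilinear product ∆_{(α,β)} is a left-symmetric structure on T*g, i.e., it satisfies x∆(y∆z) − (x∆y)∆z = y∆(x∆z) − (y∆x)∆z and x∆y − y∆x = [x,y] for all x, y, z ∈ T*g. -/

import Mathlib

namespace Paper

open Finset

/-- Index type for the basis {z, e_1,…,e_n, f_1,…,f_n, t} of the cotangent Lie algebra
`T*g` of `g = ℝ ⋉_{J_n(0)} ℝ^n`.  The constructor `Bas.e i` (with `i : Fin n`)
represents the basis vector `e_{i+1}` (math indexing `1,…,n`), similarly `Bas.f i`. -/
inductive Bas (n : ℕ) : Type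
  | z : Bas n
  | t : Bas n
  | e : Fin n → Bas n
  | f : Fin n → Bas n
  deriving DecidableEq

/-- The underlying vector space of `T*g`, as coordinate functions on the basis. -/
abbrev V (n : ℕ) : Type := Bas n → ℝ

/-- The basis vectors of `T*g`. -/
noncomputable def bas (n : ℕ) (b : Bas n) : V n := Pi.single b 1

/-- The Lie bracket of `T*g`: the bilinear extension of
`[t, e_{i+1}] = e_i`, `[t, f_{i+1}] = -f_i`, `[e_{i+1}, f_{n-i+1}] = z` for `i = 1,…,n-1`
(math indexing), all other brackets of basis vectors being zero. -/
noncomputable def bracket (n : ℕ) (x y : V n) : V n := fun b =>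
  match b with
  | Bas.z => ∑ i : Fin n, ∑ j : Fin n,
      (if (i : ℕ) + (j : ℕ) = n then
        x (Bas.e i) * y (Bas.f j) - x (Bas.f j) * y (Bas.e i) else 0)
  | Bas.t => 0
  | Bas.e k => if h : (k : ℕ) + 1 < n then
      x Bas.t * y (Bas.e ⟨(k : ℕ) + 1, h⟩) - x (Bas.e ⟨(k : ℕ) + 1, h⟩) * y Bas.t else 0
  | Bas.f k => if h : (k : ℕ) + 1 < n then
      -(x Bas.t * y (Bas.f ⟨(k : ℕ) + 1, h⟩)) + x (Bas.f ⟨(k : ℕ) + 1, h⟩) * y Bas.t else 0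

/-- `αseq α i = α_i = (i(α-1)+1)/((α-1)(i-1)+1)`. -/
noncomputable def αseq (α : ℝ) (i : ℕ) : ℝ :=
  ((i : ℝ) * (α - 1) + 1) / ((α - 1) * ((i : ℝ) - 1) + 1)

/-- `βseq β i = β_i = (i(β+1)-1)/(-(β+1)(i-1)+1)`. -/
noncomputable def βseq (β : ℝ) (i : ℕ) : ℝ :=
  ((i : ℝ) * (β + 1) - 1) / (-(β + 1) * ((i : ℝ) - 1) + 1)

/-- `γseq n α β i = γ_i = (α-1)((n-i)(β+1)-1)/(n(α-1)(β+1)-(α-1)+β+1)`. -/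
noncomputable def γseq (n : ℕ) (α β : ℝ) (i : ℕ) : ℝ :=
  ((α - 1) * (((n : ℝ) - (i : ℝ)) * (β + 1) - 1)) /
    ((n : ℝ) * (α - 1) * (β + 1) - (α - 1) + β + 1)

/-- The standing conditions on `α, β`:
`k(α-1)+1 ≠ 0` and `k(β+1)-1 ≠ 0` for all integers `k ≥ 1`, and
`n(α-1)(β+1) - α + β + 2 ≠ 0`. -/
def Cond (n : ℕ) (α β : ℝ) : Prop :=
  (∀ k : ℕ, 1 ≤ k → (k : ℝ) * (α - 1) + 1 ≠ 0) ∧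
  (∀ k : ℕ, 1 ≤ k → (k : ℝ) * (β + 1) - 1 ≠ 0) ∧
  (n : ℝ) * (α - 1) * (β + 1) - α + β + 2 ≠ 0

/-- The product `∆_{(α,β)}` on `T*g`: the bilinear extension of
`t ∆ e_{i+1} = α_i e_i`, `e_{i+1} ∆ t = (α_i - 1) e_i`, `t ∆ f_{i+1} = β_i f_i`,
`f_{i+1} ∆ t = (β_i + 1) f_i`, `e_{i+1} ∆ f_{n-i+1} = γ_i z`,
`f_{n-i+1} ∆ e_{i+1} = (γ_i - 1) z` for `i = 1,…,n-1` (math indexing),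
all other products of basis vectors being zero. -/
noncomputable def lsa (n : ℕ) (α β : ℝ) (x y : V n) : V n := fun b =>
  match b with
  | Bas.z => ∑ i : Fin n, ∑ j : Fin n,
      (if (i : ℕ) + (j : ℕ) = n then
        γseq n α β (i : ℕ) * (x (Bas.e i) * y (Bas.f j))
          + (γseq n α β (i : ℕ) - 1) * (x (Bas.f j) * y (Bas.e i))
      else 0)
  | Bas.t => 0
  | Bas.e k => if h : (k : ℕ) + 1 < n then
      αseq α ((k : ℕ) + 1) * (x Bas.t * y (Bas.e ⟨(k : ℕ) + 1, h⟩))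
        + (αseq α ((k : ℕ) + 1) - 1) * (x (Bas.e ⟨(k : ℕ) + 1, h⟩) * y Bas.t)
      else 0
  | Bas.f k => if h : (k : ℕ) + 1 < n then
      βseq β ((k : ℕ) + 1) * (x Bas.t * y (Bas.f ⟨(k : ℕ) + 1, h⟩))
        + (βseq β ((k : ℕ) + 1) + 1) * (x (Bas.f ⟨(k : ℕ) + 1, h⟩) * y Bas.t)
      else 0

/-- `D` is a left-symmetric structure on `T*g`: the associator is symmetric in the
first two arguments and `x∆y - y∆x = [x,y]`. -/
def IsLSA (n : ℕ) (D : V n → V n → V n) : Prop :=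
  (∀ x y z : V n, D x (D y z) - D (D x y) z = D y (D x z) - D (D y x) z) ∧
  (∀ x y : V n, D x y - D y x = bracket n x y)

/-- Completeness: every right translation `y ↦ y ∆ x` is nilpotent. -/
def IsComplete (n : ℕ) (D : V n → V n → V n) : Prop :=
  ∀ x : V n, ∃ m : ℕ, ∀ y : V n, (fun w => D w x)^[m] y = 0

/-- Bilinearity of a product. -/
def IsBilin (n : ℕ) (D : V n → V n → V n) : Prop :=
  (∀ (c : ℝ) (x x' y : V n), D (c • x + x') y = c • D x y + D x' y) ∧
  (∀ (c : ℝ) (x y y' : V n), D x (c • y + y') = c • D x y + D x y')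

/-- Two left-symmetric structures on `T*g` are isomorphic if some Lie algebra
automorphism of `T*g` intertwines the products. -/
def LSAIso (n : ℕ) (D D' : V n → V n → V n) : Prop :=
  ∃ φ : V n ≃ₗ[ℝ] V n,
    (∀ x y, φ (bracket n x y) = bracket n (φ x) (φ y)) ∧
    (∀ x y, φ (D x y) = D' (φ x) (φ y))

/-- The 2-form `ω_λ = t* ∧ z* + ∑ λ_i e_i* ∧ f_{n-i+1}*` with `λ_i = λ - i + 1`. -/
noncomputable def omegaForm (n : ℕ) (lam : ℝ) (x y : V n) : ℝ :=
  (x Bas.t * y Bas.z - x Bas.z * y Bas.t) +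
  ∑ i : Fin n, (lam - ((i : ℕ) : ℝ)) *
    (x (Bas.e i) * y (Bas.f ⟨n - 1 - (i : ℕ), by have := i.isLt; omega⟩)
      - x (Bas.f ⟨n - 1 - (i : ℕ), by have := i.isLt; omega⟩) * y (Bas.e i))

/-- Two symplectic forms on `T*g` are symplectomorphic up to homothety if some Lie
algebra automorphism pulls one back to a nonzero multiple of the other. -/
def SympIso (n : ℕ) (ω ω' : V n → V n → ℝ) : Prop :=
  ∃ φ : V n ≃ₗ[ℝ] V n,
    (∀ x y, φ (bracket n x y) = bracket n (φ x) (φ y)) ∧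
    ∃ c : ℝ, c ≠ 0 ∧ ∀ x y, ω' (φ x) (φ y) = c * ω x y

/-- `ω` is a symplectic structure on `T*g`. -/
def IsSymplectic (n : ℕ) (ω : V n → V n → ℝ) : Prop :=
  (∀ (c : ℝ) (x x' y : V n), ω (c • x + x') y = c * ω x y + ω x' y) ∧
  (∀ x y : V n, ω x y = - ω y x) ∧
  (∀ x : V n, (∀ y, ω x y = 0) → x = 0) ∧
  (∀ x y z : V n, ω x (bracket n y z) + ω y (bracket n z x) + ω z (bracket n x y) = 0)


set_option maxHeartbeats 1000000 in
lemma collapse (n : ℕ) (F : Fin n → Fin n → ℝ) :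
    (∑ i : Fin n, ∑ j : Fin n, if (i:ℕ)+(j:ℕ) = n then F i j else 0)
    = ∑ i ∈ Finset.range n,
        (if h : 1 ≤ i ∧ i < n then F ⟨i, h.2⟩ ⟨n - i, by omega⟩ else 0) := by
  rw [Finset.sum_range]
  apply Finset.sum_congr rfl
  intro i _
  by_cases hi : 1 ≤ (i:ℕ)
  · have hlt : n - (i:ℕ) < n := by omega
    rw [dif_pos ⟨hi, i.isLt⟩]
    rw [Finset.sum_eq_single (⟨n - (i:ℕ), hlt⟩ : Fin n)]
    · rw [if_pos (by show (i:ℕ) + (n - (i:ℕ)) = n; omega)]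
    · intro j _ hj
      rw [if_neg]
      intro hc
      exact hj (by apply Fin.ext; show (j:ℕ) = n - (i:ℕ); omega)
    · simp
  · rw [dif_neg (by omega)]
    apply Finset.sum_eq_zero
    intro j _
    rw [if_neg]
    have := j.isLt
    omega

lemma alpha_succ (α : ℝ) (i : ℕ) :
    αseq α (i+1) = (((i:ℝ)+1)*(α-1)+1)/((i:ℝ)*(α-1)+1) := by
  unfold αseq; congr 1 <;> push_cast <;> ring

lemma beta_succ (β : ℝ) (i : ℕ) :
    βseq β (i+1) = (((i:ℝ)+1)*(β+1)-1)/(-((i:ℝ)*(β+1)-1)) := by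
  unfold βseq; congr 1 <;> push_cast <;> ring

lemma KAgen (u v w : ℝ) (hu : u ≠ 0) (hv : v ≠ 0) (h : u + w = 2*v) :
    (v/u) * ((w/v) - 1) = v/u - 1 := by
  field_simp
  linear_combination h

lemma KBgen (u v w : ℝ) (hu : u ≠ 0) (hv : v ≠ 0) (h : u + w = 2*v) :
    (v/(-u)) * ((w/(-v)) + 1) + ((v/(-u)) + 1) = 0 := by
  have hu' : -u ≠ 0 := neg_ne_zero.2 hu
  have hv' : -v ≠ 0 := neg_ne_zero.2 hv
  field_simp
  linear_combination h

lemma KA (α : ℝ) (i : ℕ) (h0 : ((i:ℝ)*(α-1)+1) ≠ 0) (h1 : (((i+1:ℕ):ℝ)*(α-1)+1) ≠ 0) :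
    αseq α (i+1) * (αseq α (i+2) - 1) = αseq α (i+1) - 1 := by
  push_cast at h1
  rw [show i+2 = (i+1)+1 from rfl, alpha_succ, alpha_succ]
  push_cast
  exact KAgen _ _ _ h0 h1 (by ring)

lemma KB (β : ℝ) (i : ℕ) (h0 : ((i:ℝ)*(β+1)-1) ≠ 0) (h1 : (((i+1:ℕ):ℝ)*(β+1)-1) ≠ 0) :
    βseq β (i+1) * (βseq β (i+2) + 1) + (βseq β (i+1) + 1) = 0 := by
  push_cast at h1
  rw [show i+2 = (i+1)+1 from rfl, beta_succ, beta_succ]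
  push_cast
  exact KBgen _ _ _ h0 h1 (by ring)

lemma beta_succ' (β : ℝ) (i : ℕ) :
    βseq β (i+1) = -((((i:ℝ)+1)*(β+1)-1)/((i:ℝ)*(β+1)-1)) := by
  rw [beta_succ, div_neg]

lemma gamma_div (n : ℕ) (α β : ℝ) (i : ℕ) :
    γseq n α β i = ((α-1) * (((n:ℝ)-(i:ℝ))*(β+1)-1)) /
      ((n:ℝ)*(α-1)*(β+1)-(α-1)+β+1) := rfl

lemma gamma_pred (n : ℕ) (α β : ℝ) (i : ℕ) (h : 1 ≤ i) :
    γseq n α β (i-1) = ((α-1) * (((n:ℝ)-(i:ℝ)+1)*(β+1)-1)) /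
      ((n:ℝ)*(α-1)*(β+1)-(α-1)+β+1) := by
  unfold γseq
  congr 2
  push_cast [Nat.cast_sub h]
  ring

set_option maxHeartbeats 1000000 in
lemma idA (n : ℕ) (α β : ℝ) (i : ℕ) (hi1 : 1 ≤ i) (hi2 : i < n)
    (hQ : ((n:ℝ)-(i:ℝ))*(β+1)-1 ≠ 0)
    (hN : (n:ℝ)*(α-1)*(β+1)-(α-1)+β+1 ≠ 0) :
    γseq n α β i * βseq β (n-i+1) + γseq n α β (i-1) = 0 := by
  rw [show n-i+1 = (n-i)+1 from rfl, beta_succ' β (n-i), gamma_div, gamma_pred n α β i hi1]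
  push_cast [Nat.cast_sub hi2.le]
  field_simp
  ring

set_option maxHeartbeats 1000000 in
lemma idB (n : ℕ) (α β : ℝ) (i : ℕ)
    (hP : ((i:ℝ)*(α-1)+1) ≠ 0)
    (hN : (n:ℝ)*(α-1)*(β+1)-(α-1)+β+1 ≠ 0) :
    (γseq n α β i - 1) * αseq α (i+1) - (γseq n α β (i+1) - 1) = 0 := by
  rw [gamma_div, gamma_div, alpha_succ]
  push_cast
  have hN' : (α - 1) * ((n:ℝ) * (β + 1) - 1) + β + 1 ≠ 0 := by intro h; apply hN; linear_combination h
  have hP' : (α - 1) * (i:ℝ) + 1 ≠ 0 := by intro h; apply hP; linear_combination h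
  field_simp
  ring

set_option maxHeartbeats 1000000 in
lemma idC (n : ℕ) (α β : ℝ) (i : ℕ) (hi1 : 1 ≤ i) (hi2 : i < n)
    (hQ : ((n:ℝ)-(i:ℝ))*(β+1)-1 ≠ 0)
    (hPm : ((α-1)*((i:ℝ)-1)+1) ≠ 0)
    (hN : (n:ℝ)*(α-1)*(β+1)-(α-1)+β+1 ≠ 0) :
    γseq n α β i * (βseq β (n-i+1) + 1)
      - (γseq n α β (i-1) - 1) * (αseq α i - 1) = 0 := by
  rw [show n-i+1 = (n-i)+1 from rfl, beta_succ' β (n-i), gamma_div, gamma_pred n α β i hi1]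
  unfold αseq
  push_cast [Nat.cast_sub hi2.le]
  have hN' : (α - 1) * ((n:ℝ) * (β + 1) - 1) + β + 1 ≠ 0 := by intro h; apply hN; linear_combination h
  field_simp
  ring

noncomputable def Gt (n : ℕ) (α β : ℝ) (x y z : V n) (i : ℕ) : ℝ :=
  if h : 2 ≤ i ∧ i ≤ n - 1 then
    -(γseq n α β (i-1)) * ((x (Bas.e ⟨i, by omega⟩) * y Bas.t
        - x Bas.t * y (Bas.e ⟨i, by omega⟩)) * z (Bas.f ⟨n-i+1, by omega⟩))
    + (γseq n α β i - 1) * ((x Bas.t * y (Bas.f ⟨n-i+1, by omega⟩)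
        - x (Bas.f ⟨n-i+1, by omega⟩) * y Bas.t) * z (Bas.e ⟨i, by omega⟩))
    + (γseq n α β (i-1) - 1) * (αseq α i - 1) * ((x (Bas.e ⟨i, by omega⟩) * y (Bas.f ⟨n-i+1, by omega⟩)
        - x (Bas.f ⟨n-i+1, by omega⟩) * y (Bas.e ⟨i, by omega⟩)) * z Bas.t)
  else 0

set_option maxHeartbeats 2000000 in
/-- `∆_{(α,β)}` is a left-symmetric structure on `T*g`. -/
theorem stmt0 (n : ℕ) (hn : 2 ≤ n) (α β : ℝ) (hc : Cond n α β) :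
    IsLSA n (lsa n α β) := by
  obtain ⟨hA, hB, hN0⟩ := hc
  have hp : ∀ m : ℕ, ((m:ℝ)*(α-1)+1) ≠ 0 := by
    intro m
    match m with
    | 0 => norm_num
    | (k+1) => exact hA (k+1) (by omega)
  have hq : ∀ m : ℕ, ((m:ℝ)*(β+1)-1) ≠ 0 := by
    intro m
    match m with
    | 0 => norm_num
    | (k+1) => exact hB (k+1) (by omega)
  have hN : ((n:ℝ)*(α-1)*(β+1)-(α-1)+β+1) ≠ 0 := by
    intro h; exact hN0 (by linarith)
  constructor
  · intro x y z
    funext b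
    cases b with
    | t => simp [lsa]
    | e k =>
        simp only [Pi.sub_apply, lsa]
        split_ifs with h1 h2
        · have key := KA α (k:ℕ) (hp _) (hp _)
          push_cast at key
          linear_combination (z Bas.t * (x Bas.t * y (Bas.e ⟨(k:ℕ)+1+1, h2⟩)
            - x (Bas.e ⟨(k:ℕ)+1+1, h2⟩) * y Bas.t)) * key
        · ring
        · rfl
    | f k =>
        simp only [Pi.sub_apply, lsa]
        split_ifs with h1 h2
        · have key := KB β (k:ℕ) (hq _) (hq _)
          push_cast at key
          linear_combination (z Bas.t * (x Bas.t * y (Bas.f ⟨(k:ℕ)+1+1, h2⟩)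
            - x (Bas.f ⟨(k:ℕ)+1+1, h2⟩) * y Bas.t)) * key
        · ring
        · rfl
    | z =>
    simp only [Pi.sub_apply]
    have lz : ∀ u v : V n, lsa n α β u v Bas.z = ∑ i : Fin n, ∑ j : Fin n,
        (if (i : ℕ) + (j : ℕ) = n then
          γseq n α β (i : ℕ) * (u (Bas.e i) * v (Bas.f j))
            + (γseq n α β (i : ℕ) - 1) * (u (Bas.f j) * v (Bas.e i))
        else 0) := fun _ _ => rfl
    rw [lz x (lsa n α β y z), lz (lsa n α β x y) z, lz y (lsa n α β x z), lz (lsa n α β y x) z]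
    rw [collapse n, collapse n, collapse n, collapse n]
    rw [← Finset.sum_sub_distrib, ← Finset.sum_sub_distrib, ← sub_eq_zero, ← Finset.sum_sub_distrib]
    have h0 : ∑ i ∈ Finset.range n, (Gt n α β x y z i - Gt n α β x y z (i+1)) = 0 := by
      rw [Finset.sum_range_sub' (Gt n α β x y z) n]
      have e0 : Gt n α β x y z 0 = 0 := by unfold Gt; rw [dif_neg]; omega
      have en : Gt n α β x y z n = 0 := by unfold Gt; rw [dif_neg]; omega
      rw [e0, en, sub_self]
    rw [← h0]
    apply Finset.sum_congr rfl
    intro i hi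
    simp only [Finset.mem_range] at hi
    rcases Nat.eq_zero_or_pos i with rfl | hi1
    · norm_num [Gt, lsa]
    · have kA := idA n α β i hi1 hi (by
        have := hq (n-i); push_cast [Nat.cast_sub hi.le] at this; exact this) hN
      have kB := idB n α β i (hp i) hN
      have kC := idC n α β i hi1 hi (by
        have := hq (n-i); push_cast [Nat.cast_sub hi.le] at this; exact this) (by
        have := hp (i-1); push_cast [Nat.cast_sub hi1] at this;
        rw [mul_comm ((i:ℝ)-1) (α-1)] at this; exact this) hN
      unfold Gt
      simp only [lsa, Fin.val_mk, Nat.add_sub_cancel, show n-(i+1)+1 = n-i from by omega, show 1+i = i+1 from by omega, show 1+(n-i) = n-i+1 from by omega]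
      split_ifs with hc1 hc2 hc3 hc4 hc5
      all_goals try (exfalso; omega)
      all_goals try ring
      · linear_combination (norm := ring_nf)
            ((x (Bas.e ⟨i, by omega⟩) * y Bas.t - x Bas.t * y (Bas.e ⟨i, by omega⟩))
                * z (Bas.f ⟨n-i+1, by omega⟩)) * kA
            + ((x (Bas.e ⟨i, by omega⟩) * y (Bas.f ⟨n-i+1, by omega⟩)
                - x (Bas.f ⟨n-i+1, by omega⟩) * y (Bas.e ⟨i, by omega⟩)) * z Bas.t) * kC
            + ((x (Bas.f ⟨n-i, by omega⟩) * y Bas.t - x Bas.t * y (Bas.f ⟨n-i, by omega⟩))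
                * z (Bas.e ⟨i+1, by omega⟩)) * kB
      · linear_combination (norm := ring_nf)
            ((x (Bas.e ⟨i, by omega⟩) * y Bas.t - x Bas.t * y (Bas.e ⟨i, by omega⟩))
                * z (Bas.f ⟨n-i+1, by omega⟩)) * kA
            + ((x (Bas.e ⟨i, by omega⟩) * y (Bas.f ⟨n-i+1, by omega⟩)
                - x (Bas.f ⟨n-i+1, by omega⟩) * y (Bas.e ⟨i, by omega⟩)) * z Bas.t) * kC
      · linear_combination (norm := ring_nf)
            ((x (Bas.f ⟨n-i, by omega⟩) * y Bas.t - x Bas.t * y (Bas.f ⟨n-i, by omega⟩))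
                * z (Bas.e ⟨i+1, by omega⟩)) * kB

  · intro x y
    funext b
    cases b with
    | t => simp [lsa, bracket]
    | z =>
        simp only [Pi.sub_apply, lsa, bracket, ← Finset.sum_sub_distrib]
        refine Finset.sum_congr rfl fun i _ => ?_
        refine Finset.sum_congr rfl fun j _ => ?_
        split_ifs with h
        · ring
        · ring
    | e k =>
        simp only [Pi.sub_apply, lsa, bracket]
        split_ifs with h
        · ring
        · ring
    | f k =>
        simp only [Pi.sub_apply, lsa, bracket]
        split_ifs with h
        · ring
        · ring

end Paper
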